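/- Let I be a bounded interval in ℝ, k ≥ 3 an odd positive integer, c, ε > 0 with 2ε < c, φ : I → ℝ a function, and D ⊆ I. Suppose φ(y) ≥ φ(x) + c(y-x)^k - ε|y-x|^k for every x, y ∈ D. Then D has Lebesgue measure zero. -/

import Mathlib

open MeasureTheory

/-- Covering lemma: a set that is uniformly porous (between any two of its points
there is a central gap of 1/10 relative size) has small measure in every interval. -/
lemma porous_cover (D : Set ℝ)
    (gap : ∀ x ∈ D, ∀ z ∈ D, x < z → ∀ y ∈ D, ¬ |y - (x + z) / 2| < (z - x) / 20) :
    ∀ n : ℕ, ∀ u v : ℝ,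
      volume (D ∩ Set.Icc u v) ≤ ENNReal.ofReal ((9/10 : ℝ) ^ n * (v - u)) := by
  intro n
  induction n with
  | zero =>
    intro u v
    calc volume (D ∩ Set.Icc u v) ≤ volume (Set.Icc u v) :=
          measure_mono Set.inter_subset_right
      _ = ENNReal.ofReal (v - u) := Real.volume_Icc
      _ = ENNReal.ofReal ((9/10 : ℝ) ^ 0 * (v - u)) := by norm_num
  | succ n ih =>
    intro u v
    by_cases huv : u ≤ v
    · -- use slack δ
      refine ENNReal.le_of_forall_pos_le_add fun ε' hε' _ => ?_
      set δ : ℝ := (ε' : ℝ) / 2 with hδdef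
      have hδ : 0 < δ := by positivity
      have key : volume (D ∩ Set.Icc u v) ≤
          ENNReal.ofReal ((9/10 : ℝ) ^ (n+1) * (v - u)) + ENNReal.ofReal (2 * δ) := by
        by_cases hne : (D ∩ Set.Icc u v).Nonempty
        · set S := D ∩ Set.Icc u v with hS
          have hbdd : BddBelow S := ⟨u, fun y hy => hy.2.1⟩
          have hbdd' : BddAbove S := ⟨v, fun y hy => hy.2.2⟩
          obtain ⟨x, hxS, hx⟩ := Real.lt_sInf_add_pos hne hδ
          obtain ⟨z, hzS, hz⟩ : ∃ a ∈ S, sSup S - δ < a := by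
            obtain ⟨a, ha, ha'⟩ := Real.add_neg_lt_sSup hne (show -δ < 0 by linarith)
            exact ⟨a, ha, by linarith⟩
          have hSsub : S ⊆ Set.Icc (x - δ) (z + δ) := by
            intro y hy
            constructor
            · have : sInf S ≤ y := csInf_le hbdd hy
              linarith
            · have : y ≤ sSup S := le_csSup hbdd' hy
              linarith
          by_cases hxz : x < z
          · set d : ℝ := z - x with hd
            have hd0 : 0 < d := by simpa [hd] using sub_pos.mpr hxz
            set m : ℝ := (x + z) / 2 with hm
            -- split S into left and right pieces
            have hsplit : S ⊆ (D ∩ Set.Icc (x - δ) (m - d/20)) ∪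
                (D ∩ Set.Icc (m + d/20) (z + δ)) := by
              intro y hy
              have hyD : y ∈ D := hy.1
              have hyI := hSsub hy
              have hgap := gap x hxS.1 z hzS.1 hxz y hyD
              rw [not_lt] at hgap
              rcases abs_sub_le_iff.mp (le_refl |y - (x+z)/2|) with _
              rcases le_abs.mp hgap with h | h
              · right
                exact ⟨hyD, by constructor <;> [linarith [h]; exact hyI.2]⟩
              · left
                refine ⟨hyD, hyI.1, ?_⟩
                have : (x+z)/2 - y ≥ (z - x)/20 := by linarith [h]
                have : y ≤ m - d/20 := by rw [hm, hd]; linarith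
                exact this
            have hxu : u ≤ x := hxS.2.1
            have hzv : z ≤ v := hzS.2.2
            have hduv : d ≤ v - u := by rw [hd]; linarith
            calc volume S ≤ volume ((D ∩ Set.Icc (x - δ) (m - d/20)) ∪
                    (D ∩ Set.Icc (m + d/20) (z + δ))) := measure_mono hsplit
              _ ≤ volume (D ∩ Set.Icc (x - δ) (m - d/20)) +
                    volume (D ∩ Set.Icc (m + d/20) (z + δ)) := measure_union_le _ _
              _ ≤ ENNReal.ofReal ((9/10 : ℝ) ^ n * ((m - d/20) - (x - δ))) +
                    ENNReal.ofReal ((9/10 : ℝ) ^ n * ((z + δ) - (m + d/20))) :=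
                  add_le_add (ih _ _) (ih _ _)
              _ = ENNReal.ofReal ((9/10 : ℝ) ^ n * (9*d/20 + δ)) +
                    ENNReal.ofReal ((9/10 : ℝ) ^ n * (9*d/20 + δ)) := by
                  rw [hm, hd]; ring_nf
              _ = ENNReal.ofReal ((9/10 : ℝ) ^ n * (9*d/20 + δ) +
                    (9/10 : ℝ) ^ n * (9*d/20 + δ)) := by
                  rw [ENNReal.ofReal_add] <;> positivity
              _ ≤ ENNReal.ofReal ((9/10 : ℝ) ^ (n+1) * (v - u) + 2 * δ) := by
                  apply ENNReal.ofReal_le_ofReal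
                  have hpow1 : (9/10 : ℝ) ^ n ≤ 1 :=
                    pow_le_one₀ (by norm_num) (by norm_num)
                  have hpow0 : (0:ℝ) < (9/10 : ℝ) ^ n := by positivity
                  have h1 : (9/10:ℝ)^n * (9*d/20) + (9/10:ℝ)^n * (9*d/20)
                      = (9/10:ℝ)^(n+1) * d := by ring
                  nlinarith [mul_le_mul_of_nonneg_left hduv (le_of_lt (by positivity :
                    (0:ℝ) < (9/10:ℝ)^(n+1))), mul_le_mul_of_nonneg_right hpow1 hδ.le]
              _ ≤ ENNReal.ofReal ((9/10 : ℝ) ^ (n+1) * (v - u)) + ENNReal.ofReal (2 * δ) :=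
                  ENNReal.ofReal_add_le
          · -- diameter at most 2δ
            have h2δ : z + δ - (x - δ) ≤ 2 * δ := by
              push_neg at hxz; linarith
            calc volume S ≤ volume (Set.Icc (x - δ) (z + δ)) := measure_mono hSsub
              _ = ENNReal.ofReal (z + δ - (x - δ)) := Real.volume_Icc
              _ ≤ ENNReal.ofReal (2 * δ) := ENNReal.ofReal_le_ofReal h2δ
              _ ≤ _ := le_add_self
        · rw [Set.not_nonempty_iff_eq_empty] at hne
          simp [hne]
      refine key.trans ?_
      gcongr
      rw [hδdef]
      rw [show (2:ℝ) * ((ε':ℝ)/2) = (ε':ℝ) by ring, ENNReal.ofReal_coe_nnreal]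
    · push_neg at huv
      rw [Set.Icc_eq_empty_of_lt huv]
      simp

theorem odd_power_growth_null
    (I : Set ℝ) (hIint : I.OrdConnected) (hIbd : Bornology.IsBounded I)
    (k : ℕ) (hk3 : 3 ≤ k) (hkodd : Odd k)
    (c ε : ℝ) (hc : 0 < c) (hε : 0 < ε) (hεc : 2 * ε < c)
    (φ : ℝ → ℝ) (D : Set ℝ) (hD : D ⊆ I)
    (hyp : ∀ x ∈ D, ∀ y ∈ D, φ x + c * (y - x) ^ k - ε * |y - x| ^ k ≤ φ y) :
    volume D = 0 := by
  -- Step 1: porosity of D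
  have gap : ∀ x ∈ D, ∀ z ∈ D, x < z → ∀ y ∈ D, ¬ |y - (x + z) / 2| < (z - x) / 20 := by
    intro x hx z hz hxz y hy habs
    set d : ℝ := z - x with hdd
    have hd0 : 0 < d := sub_pos.mpr hxz
    have hy1 : (x + z)/2 - d/20 < y := by
      have := abs_lt.mp habs
      linarith [this.1]
    have hy2 : y < (x + z)/2 + d/20 := by
      have := abs_lt.mp habs
      linarith [this.2]
    set a : ℝ := y - x with ha
    set b : ℝ := z - y with hb
    have ha0 : 0 < a := by rw [ha]; rw [hdd] at hy1; linarith
    have hb0 : 0 < b := by rw [hb]; rw [hdd] at hy2; linarith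
    have haub : a < 11/20 * d := by rw [ha, hdd]; rw [hdd] at hy2; linarith
    have hbub : b < 11/20 * d := by rw [hb, hdd]; rw [hdd] at hy1; linarith
    -- from hyp (x, z): lower bound
    have h1 : φ x + (c - ε) * d ^ k ≤ φ z := by
      have := hyp x hx z hz
      have habsd : |z - x| = d := by rw [hdd]; exact abs_of_pos hd0 ▸ rfl
      rw [habsd] at this
      calc φ x + (c - ε) * d ^ k = φ x + c * (z - x) ^ k - ε * d ^ k := by
            rw [← hdd]; ring
        _ ≤ φ z := this
    -- from hyp (z, y): φ z ≤ φ y + (c+ε) b^k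
    have h2 : φ z ≤ φ y + (c + ε) * b ^ k := by
      have := hyp z hz y hy
      have hneg : (y - z : ℝ) = -b := by rw [hb]; ring
      have hodd : (y - z) ^ k = -(b ^ k) := by rw [hneg, hkodd.neg_pow]
      have habsb : |y - z| = b := by rw [hneg, abs_neg, abs_of_pos hb0]
      rw [hodd, habsb] at this
      nlinarith [this]
    -- from hyp (y, x): φ y ≤ φ x + (c+ε) a^k
    have h3 : φ y ≤ φ x + (c + ε) * a ^ k := by
      have := hyp y hy x hx
      have hneg : (x - y : ℝ) = -a := by rw [ha]; ring
      have hodd : (x - y) ^ k = -(a ^ k) := by rw [hneg, hkodd.neg_pow]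
      have habsa : |x - y| = a := by rw [hneg, abs_neg, abs_of_pos ha0]
      rw [hodd, habsa] at this
      nlinarith [this]
    -- combine
    have hcomb : (c - ε) * d ^ k ≤ (c + ε) * (a ^ k + b ^ k) := by nlinarith
    -- bounds on powers
    have hak : a ^ k < (11/20 * d) ^ k := by
      exact pow_lt_pow_left₀ haub ha0.le (by omega)
    have hbk : b ^ k < (11/20 * d) ^ k := by
      exact pow_lt_pow_left₀ hbub hb0.le (by omega)
    have hqk : ((11:ℝ)/20) ^ k ≤ (11/20 : ℝ) ^ 3 :=
      pow_le_pow_of_le_one (by norm_num) (by norm_num) hk3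
    have hdk : (0:ℝ) < d ^ k := pow_pos hd0 k
    have hsplit : ((11:ℝ)/20 * d) ^ k = (11/20:ℝ)^k * d^k := mul_pow _ _ _
    have hcε : 0 < c + ε := by linarith
    -- (c+ε)(a^k+b^k) < (c+ε)·2·(11/20)^3 d^k ≤ (3c/2)(2·1331/8000) d^k < (c/2) d^k ≤ (c-ε)d^k
    nlinarith [mul_lt_mul_of_pos_left (add_lt_add hak hbk) hcε,
      mul_le_mul_of_nonneg_right hqk (le_of_lt hdk), sq_nonneg d]
  -- Step 2: D is bounded, apply covering lemma
  obtain ⟨r, hr⟩ := hIbd.subset_closedBall 0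
  have hDr : D ⊆ Set.Icc (-r) r := by
    intro x hx
    have := hr (hD hx)
    rwa [Real.closedBall_eq_Icc, zero_sub, zero_add] at this
  have hbound : ∀ n : ℕ, volume D ≤ ENNReal.ofReal ((9/10 : ℝ) ^ n * (r - (-r))) := by
    intro n
    have : volume D = volume (D ∩ Set.Icc (-r) r) := by
      rw [Set.inter_eq_self_of_subset_left hDr]
    rw [this]
    exact porous_cover D gap n (-r) r
  -- take the limit
  have htend : Filter.Tendsto (fun n : ℕ => ENNReal.ofReal ((9/10 : ℝ) ^ n * (r - (-r))))
      Filter.atTop (nhds 0) := by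
    have h1 : Filter.Tendsto (fun n : ℕ => (9/10 : ℝ) ^ n * (r - (-r)))
        Filter.atTop (nhds 0) := by
      have := tendsto_pow_atTop_nhds_zero_of_lt_one (by norm_num : (0:ℝ) ≤ 9/10)
        (by norm_num : (9/10:ℝ) < 1)
      simpa using this.mul_const (r - (-r))
    have := (ENNReal.continuous_ofReal.tendsto 0).comp h1
    simpa [Function.comp_def] using this
  have : volume D ≤ 0 :=
    le_of_tendsto_of_tendsto tendsto_const_nhds htend
      (Filter.Eventually.of_forall hbound)
  exact le_antisymm this zero_le
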